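/- The shifted Hankel determinant det(Φ_{i+j+1}(x,r))_{i,j=0}^{n-1} equals det(Φ_{i+j}(x,r))_{i,j=0}^{n-1} · ∑_{k=0}^n [n choose k]_q (q^{n-1+r} x)^k ∏_{j=0}^{n-k-1} [r+j]. -/

import Mathlib

noncomputable section

open Finset Polynomial

/-- q-analogue [m] = (1-q^m)/(1-q) = 1 + q + ... + q^(m-1). -/
def qb (q : ℚ) (m : ℕ) : ℚ := ∑ i ∈ Finset.range m, q ^ i

/-- q-factorial [n]! -/
def qfact (q : ℚ) (n : ℕ) : ℚ := ∏ i ∈ Finset.range n, qb q (i + 1)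

/-- Gaussian binomial coefficient [n choose k]_q via the q-Pascal recurrence. -/
def qbinom (q : ℚ) : ℕ → ℕ → ℚ
  | _, 0 => 1
  | 0, _ + 1 => 0
  | n + 1, k + 1 => qbinom q n k + q ^ (k + 1) * qbinom q n (k + 1)

/-- Generalized q-Stirling numbers S(n,k,r). -/
def qS (q : ℚ) (r : ℕ) : ℕ → ℕ → ℚ
  | 0, 0 => 1
  | 0, _ + 1 => 0
  | n + 1, 0 => qb q r * qS q r n 0
  | n + 1, k + 1 => qS q r n k + qb q (k + 1 + r) * qS q r n (k + 1)

/-- Generalized falling factorial ⟨x⟩_{r,k} = ∏_{j=0}^{k-1} (x - [r+j]). -/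
def qfall (q : ℚ) (r : ℕ) (x : ℚ) (k : ℕ) : ℚ := ∏ j ∈ Finset.range k, (x - qb q (r + j))

/-- Second generalized q-exponential polynomial Φ_n(x,r). -/
def qPhi (q : ℚ) (r : ℕ) (n : ℕ) (x : ℚ) : ℚ :=
  ∑ k ∈ Finset.range (n + 1), qS q r n k * q ^ Nat.choose k 2 * (q ^ r * x) ^ k

namespace Hankel

variable (q x : ℚ)

lemma qb_succ (m : ℕ) : qb q (m + 1) = 1 + q * qb q m := by
  simp only [qb, Finset.sum_range_succ', pow_zero, pow_succ, Finset.mul_sum]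
  rw [add_comm]
  congr 1
  refine Finset.sum_congr rfl fun i _ => ?_
  ring

lemma qb_succ' (m : ℕ) : qb q (m + 1) = qb q m + q ^ m :=
  Finset.sum_range_succ _ _

lemma qS_eq_zero : ∀ n k : ℕ, n < k → ∀ r, qS q r n k = 0
  | 0, k + 1, _, r => by simp [qS]
  | n + 1, k + 1, h, r => by
    have h1 : n < k := by omega
    have h2 : n < k + 1 := by omega
    simp [qS, qS_eq_zero n k h1 r, qS_eq_zero n (k + 1) h2 r]

lemma qS_succ_r : ∀ (m k s : ℕ),
    qS q s (m + 1) (k + 1) = qb q s * qS q s m (k + 1) + qS q (s + 1) m k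
  | 0, 0, s => by simp [qS]
  | 0, k + 1, s => by simp [qS]
  | m + 1, 0, s => by
    have ihk := qS_succ_r m 0 s
    simp only [qS] at ihk ⊢
    have ek : qS q (s + 1) m 0
        = qS q s m 0 + qb q (0 + 1 + s) * qS q s m (0 + 1) - qb q s * qS q s m (0 + 1) := by
      linarith
    rw [ek]
    have e1 : (0 + 1 + s) = s + 1 := by omega
    rw [e1]
    ring
  | m + 1, k + 1, s => by
    have ihk := qS_succ_r m k s
    have ihk1 := qS_succ_r m (k + 1) s
    simp only [qS] at ihk ihk1 ⊢
    have ek : qS q (s + 1) m k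
        = qS q s m k + qb q (k + 1 + s) * qS q s m (k + 1) - qb q s * qS q s m (k + 1) := by
      linarith
    have ek1 : qS q (s + 1) m (k + 1)
        = qS q s m (k + 1) + qb q (k + 1 + 1 + s) * qS q s m (k + 1 + 1)
          - qb q s * qS q s m (k + 1 + 1) := by
      linarith
    rw [ek, ek1]
    have e1 : (k + 1 + (s + 1)) = k + 1 + 1 + s := by omega
    rw [e1]
    ring


lemma choose_two_succ (k : ℕ) : Nat.choose (k + 1) 2 = Nat.choose k 2 + k := by
  rw [Nat.choose_succ_succ]
  simp [Nat.choose_one_right, Nat.add_comm]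

lemma qPhi_zero (r : ℕ) : qPhi q r 0 x = 1 := by
  simp [qPhi, qS]

lemma qPhi_succ (s m : ℕ) :
    qPhi q s (m + 1) x = qb q s * qPhi q s m x + q ^ s * x * qPhi q (s + 1) m x := by
  have h1 : ∀ k ∈ Finset.range (m + 1),
      qS q s (m + 1) (k + 1) * q ^ Nat.choose (k + 1) 2 * (q ^ s * x) ^ (k + 1)
      = qb q s * (qS q s m (k + 1) * q ^ Nat.choose (k + 1) 2 * (q ^ s * x) ^ (k + 1))
        + q ^ s * x * (qS q (s + 1) m k * q ^ Nat.choose k 2 * (q ^ (s + 1) * x) ^ k) := by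
    intro k _
    rw [qS_succ_r, choose_two_succ, pow_add]
    have e : (q ^ (s + 1) * x) ^ k = (q ^ s * x) ^ k * q ^ k := by
      rw [pow_succ]; ring
    rw [e]
    ring
  have hL : qPhi q s (m + 1) x
      = (∑ k ∈ Finset.range (m + 1),
          (qb q s * (qS q s m (k + 1) * q ^ Nat.choose (k + 1) 2 * (q ^ s * x) ^ (k + 1))
            + q ^ s * x * (qS q (s + 1) m k * q ^ Nat.choose k 2 * (q ^ (s + 1) * x) ^ k)))
        + qb q s * (qS q s m 0 * q ^ Nat.choose 0 2 * (q ^ s * x) ^ 0) := by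
    simp only [qPhi]
    rw [Finset.sum_range_succ'
      (fun k => qS q s (m + 1) k * q ^ Nat.choose k 2 * (q ^ s * x) ^ k) (m + 1)]
    rw [Finset.sum_congr rfl h1]
    congr 1
    simp only [qS]
    ring
  rw [hL, Finset.sum_add_distrib, ← Finset.mul_sum, ← Finset.mul_sum]
  have hzero : (∑ k ∈ Finset.range (m + 1),
        qS q s m (k + 1) * q ^ Nat.choose (k + 1) 2 * (q ^ s * x) ^ (k + 1))
      = ∑ k ∈ Finset.range m, qS q s m (k + 1) * q ^ Nat.choose (k + 1) 2 * (q ^ s * x) ^ (k + 1) := by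
    rw [Finset.sum_range_succ, qS_eq_zero q m (m + 1) (by omega)]
    simp
  have hsplit : qPhi q s m x
      = (∑ k ∈ Finset.range m, qS q s m (k + 1) * q ^ Nat.choose (k + 1) 2 * (q ^ s * x) ^ (k + 1))
        + qS q s m 0 * q ^ Nat.choose 0 2 * (q ^ s * x) ^ 0 := by
    simp only [qPhi]
    exact Finset.sum_range_succ' _ m
  rw [hzero, hsplit]
  simp only [qPhi]
  ring

lemma phi_add : ∀ (n m r : ℕ), qPhi q r (n + m) x =
    ∑ k ∈ Finset.range (n + 1),
      qS q r n k * q ^ Nat.choose k 2 * (q ^ r * x) ^ k * qPhi q (r + k) m x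
  | 0, m, r => by simp [qS]
  | n + 1, m, r => by
    have e0 : n + 1 + m = n + (m + 1) := by omega
    rw [e0, phi_add n (m + 1) r]
    have h1 : ∀ k ∈ Finset.range (n + 1),
        qS q r n k * q ^ Nat.choose k 2 * (q ^ r * x) ^ k * qPhi q (r + k) (m + 1) x
        = qb q (r + k) * (qS q r n k * q ^ Nat.choose k 2 * (q ^ r * x) ^ k * qPhi q (r + k) m x)
          + qS q r n k * q ^ Nat.choose (k + 1) 2 * (q ^ r * x) ^ (k + 1) * qPhi q (r + (k + 1)) m x := by
      intro k _
      rw [qPhi_succ, choose_two_succ]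
      have e : r + k + 1 = r + (k + 1) := by omega
      rw [e, pow_add, pow_add]
      ring
    rw [Finset.sum_congr rfl h1, Finset.sum_add_distrib]
    -- target
    rw [Finset.sum_range_succ' (fun k => qS q r (n + 1) k * q ^ Nat.choose k 2 * (q ^ r * x) ^ k * qPhi q (r + k) m x) (n + 1)]
    have h2 : ∀ k ∈ Finset.range (n + 1),
        qS q r (n + 1) (k + 1) * q ^ Nat.choose (k + 1) 2 * (q ^ r * x) ^ (k + 1) * qPhi q (r + (k + 1)) m x
        = qS q r n k * q ^ Nat.choose (k + 1) 2 * (q ^ r * x) ^ (k + 1) * qPhi q (r + (k + 1)) m x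
          + qb q (k + 1 + r) * qS q r n (k + 1) * q ^ Nat.choose (k + 1) 2 * (q ^ r * x) ^ (k + 1) * qPhi q (r + (k + 1)) m x := by
      intro k _
      simp only [qS]
      ring
    rw [Finset.sum_congr rfl h2, Finset.sum_add_distrib]
    have h3 : qS q r (n + 1) 0 * q ^ Nat.choose 0 2 * (q ^ r * x) ^ 0 * qPhi q (r + 0) m x
        = qb q (r + 0) * (qS q r n 0 * q ^ Nat.choose 0 2 * (q ^ r * x) ^ 0 * qPhi q (r + 0) m x) := by
      simp only [qS]
      have : r + 0 = r := rfl
      ring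
    have h4 : ∑ k ∈ Finset.range (n + 1),
        qb q (r + k) * (qS q r n k * q ^ Nat.choose k 2 * (q ^ r * x) ^ k * qPhi q (r + k) m x)
        = (∑ k ∈ Finset.range (n + 1),
            qb q (k + 1 + r) * qS q r n (k + 1) * q ^ Nat.choose (k + 1) 2 * (q ^ r * x) ^ (k + 1) * qPhi q (r + (k + 1)) m x)
          + qS q r (n + 1) 0 * q ^ Nat.choose 0 2 * (q ^ r * x) ^ 0 * qPhi q (r + 0) m x := by
      rw [Finset.sum_range_succ' (fun k => qb q (r + k) * (qS q r n k * q ^ Nat.choose k 2 * (q ^ r * x) ^ k * qPhi q (r + k) m x)) n]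
      rw [h3]
      congr 1
      rw [Finset.sum_range_succ, qS_eq_zero q n (n + 1) (by omega)]
      have h5 : ∀ k ∈ Finset.range n,
          qb q (r + (k + 1)) * (qS q r n (k + 1) * q ^ Nat.choose (k + 1) 2 * (q ^ r * x) ^ (k + 1) * qPhi q (r + (k + 1)) m x)
          = qb q (k + 1 + r) * qS q r n (k + 1) * q ^ Nat.choose (k + 1) 2 * (q ^ r * x) ^ (k + 1) * qPhi q (r + (k + 1)) m x := by
        intro k _
        have e : r + (k + 1) = k + 1 + r := by omega
        rw [e]
        ring
      rw [Finset.sum_congr rfl h5]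
      ring
    rw [h4]
    ring


lemma qbinom_eq_zero : ∀ n k : ℕ, n < k → qbinom q n k = 0
  | 0, k + 1, _ => by simp [qbinom]
  | n + 1, k + 1, h => by
    have h1 : n < k := by omega
    have h2 : n < k + 1 := by omega
    simp [qbinom, qbinom_eq_zero n k h1, qbinom_eq_zero n (k + 1) h2]

lemma qbinom_zero_right (n : ℕ) : qbinom q n 0 = 1 := by
  cases n <;> simp [qbinom]

lemma qbinom_one : ∀ n : ℕ, qbinom q n 1 = qb q n
  | 0 => by simp [qbinom, qb]
  | n + 1 => by
    show qbinom q n 0 + q ^ (0 + 1) * qbinom q n (0 + 1) = _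
    rw [qbinom_zero_right, qbinom_one n, qb_succ]
    ring

lemma qbinom_pascal2 : ∀ n k : ℕ, qbinom q (n + 1) (k + 1)
    = qbinom q n (k + 1) + q ^ (n - k) * qbinom q n k
  | 0, 0 => by simp [qbinom]
  | 0, k + 1 => by simp [qbinom]
  | n + 1, 0 => by
    have e1 : qbinom q (n + 2) 1 = qb q (n + 2) := qbinom_one q (n + 2)
    have e2 : qbinom q (n + 1) 1 = qb q (n + 1) := qbinom_one q (n + 1)
    rw [e1, e2, qbinom_zero_right, qb_succ' q (n + 1)]
    simp
  | n + 1, k + 1 => by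
    have ih1 := qbinom_pascal2 n k
    have ih2 := qbinom_pascal2 n (k + 1)
    have hd : qbinom q (n + 2) (k + 2)
        = qbinom q (n + 1) (k + 1) + q ^ (k + 2) * qbinom q (n + 1) (k + 2) := rfl
    have hr : qbinom q (n + 1) (k + 2)
        = qbinom q n (k + 1) + q ^ (k + 2) * qbinom q n (k + 2) := rfl
    have hr2 : qbinom q (n + 1) (k + 1)
        = qbinom q n k + q ^ (k + 1) * qbinom q n (k + 1) := rfl
    rw [Nat.succ_sub_succ]
    conv_lhs => rw [hd, ih1, ih2]
    conv_rhs => rw [hr, hr2]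
    rcases le_or_gt (k + 1) n with h | h
    · have e1 : n - k = n - (k + 1) + 1 := by omega
      rw [e1]
      ring
    · rw [qbinom_eq_zero q n (k + 1) h, qbinom_eq_zero q n (k + 2) (by omega)]
      ring

def Kop (q : ℚ) : ℕ → (ℕ → ℚ) → ℕ → ℚ
  | 0, g, s => g s
  | n + 1, g, s => Kop q n g (s + 1) - q ^ n * Kop q n g s

lemma Kop_explicit : ∀ (n : ℕ) (g : ℕ → ℚ) (s : ℕ), Kop q n g s
    = ∑ t ∈ Finset.range (n + 1),
        (-1 : ℚ) ^ (n - t) * q ^ Nat.choose (n - t) 2 * qbinom q n (n - t) * g (s + t)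
  | 0, g, s => by simp [Kop, qbinom]
  | n + 1, g, s => by
    show Kop q n g (s + 1) - q ^ n * Kop q n g s = _
    rw [Kop_explicit n g (s + 1), Kop_explicit n g s]
    rw [Finset.sum_range_succ (fun t =>
      (-1 : ℚ) ^ (n - t) * q ^ Nat.choose (n - t) 2 * qbinom q n (n - t) * g (s + 1 + t)) n]
    rw [Finset.sum_range_succ' (fun t =>
      (-1 : ℚ) ^ (n - t) * q ^ Nat.choose (n - t) 2 * qbinom q n (n - t) * g (s + t)) n]
    conv_rhs => rw [Finset.sum_range_succ (fun t =>
      (-1 : ℚ) ^ (n + 1 - t) * q ^ Nat.choose (n + 1 - t) 2 * qbinom q (n + 1) (n + 1 - t)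
        * g (s + t)) (n + 1)]
    rw [Finset.sum_range_succ' (fun t =>
      (-1 : ℚ) ^ (n + 1 - t) * q ^ Nat.choose (n + 1 - t) 2 * qbinom q (n + 1) (n + 1 - t)
        * g (s + t)) n]
    have hterm : ∀ t ∈ Finset.range n,
        (-1 : ℚ) ^ (n + 1 - (t + 1)) * q ^ Nat.choose (n + 1 - (t + 1)) 2
            * qbinom q (n + 1) (n + 1 - (t + 1)) * g (s + (t + 1))
        = (-1 : ℚ) ^ (n - t) * q ^ Nat.choose (n - t) 2 * qbinom q n (n - t) * g (s + 1 + t)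
          - q ^ n * ((-1 : ℚ) ^ (n - (t + 1)) * q ^ Nat.choose (n - (t + 1)) 2
            * qbinom q n (n - (t + 1)) * g (s + (t + 1))) := by
      intro t ht
      have htn : t < n := Finset.mem_range.mp ht
      have e1 : n + 1 - (t + 1) = n - t := by omega
      have e2 : n - t = (n - (t + 1)) + 1 := by omega
      have e3 : s + 1 + t = s + (t + 1) := by omega
      rw [e1, e3]
      rw [show qbinom q (n + 1) (n - t) = qbinom q (n + 1) ((n - (t + 1)) + 1) from by rw [← e2]]
      rw [qbinom_pascal2 q n (n - (t + 1))]
      rw [show n - (n - (t + 1)) = t + 1 from by omega]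
      rw [show qbinom q n ((n - (t + 1)) + 1) = qbinom q n (n - t) from by rw [← e2]]
      rw [e2]
      rw [show Nat.choose (n - (t + 1) + 1) 2 = Nat.choose (n - (t + 1)) 2 + (n - (t + 1)) from
        choose_two_succ (n - (t + 1))]
      have e4 : (-1 : ℚ) ^ (n - (t + 1) + 1) = -(-1 : ℚ) ^ (n - (t + 1)) := by
        rw [pow_succ]; ring
      rw [e4]
      rw [pow_add q (Nat.choose (n - (t+1)) 2) (n - (t+1)), pow_add]
      have e5 : q ^ (t + 1) * q ^ (n - (t + 1)) = q ^ n := by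
        rw [← pow_add]
        congr 1
        omega
      rw [← e5]
      ring
    rw [Finset.sum_congr rfl hterm, Finset.sum_sub_distrib, ← Finset.mul_sum]
    have edge1 : (-1 : ℚ) ^ (n - n) * q ^ Nat.choose (n - n) 2 * qbinom q n (n - n) * g (s + 1 + n)
        = g (s + (n + 1)) := by
      have e : s + 1 + n = s + (n + 1) := by omega
      rw [Nat.sub_self, e, qbinom_zero_right]
      norm_num
    have edge2 : (-1 : ℚ) ^ (n + 1 - (n + 1)) * q ^ Nat.choose (n + 1 - (n + 1)) 2
          * qbinom q (n + 1) (n + 1 - (n + 1)) * g (s + (n + 1)) = g (s + (n + 1)) := by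
      rw [Nat.sub_self, qbinom_zero_right]
      norm_num
    have edge3 : (-1 : ℚ) ^ (n + 1 - 0) * q ^ Nat.choose (n + 1 - 0) 2
          * qbinom q (n + 1) (n + 1 - 0) * g (s + 0)
        = -(q ^ n * ((-1 : ℚ) ^ (n - 0) * q ^ Nat.choose (n - 0) 2 * qbinom q n (n - 0)
            * g (s + 0))) := by
      simp only [Nat.sub_zero]
      have hq : qbinom q (n + 1) (n + 1) = qbinom q n n := by
        show qbinom q n n + q ^ (n + 1) * qbinom q n (n + 1) = _
        rw [qbinom_eq_zero q n (n + 1) (by omega)]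
        ring
      rw [hq, choose_two_succ n, pow_add, pow_succ]
      ring
    linear_combination edge1 - edge2 - edge3


lemma qS_shift : ∀ (j k s : ℕ), qS q (s + 1) j k * q ^ k
    = ∑ i ∈ Finset.range (j + 1), (Nat.choose j i : ℚ) * q ^ i * qS q s i k
  | 0, 0, s => by simp [qS]
  | 0, k + 1, s => by simp [qS]
  | j + 1, 0, s => by
    have ih0 := qS_shift j 0 s
    rw [Finset.sum_range_succ' (fun i => (Nat.choose (j + 1) i : ℚ) * q ^ i * qS q s i 0) (j + 1)]
    have hterm : ∀ i ∈ Finset.range (j + 1),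
        (Nat.choose (j + 1) (i + 1) : ℚ) * q ^ (i + 1) * qS q s (i + 1) 0
        = (Nat.choose j (i + 1) : ℚ) * q ^ (i + 1) * qS q s (i + 1) 0
          + q * qb q s * ((Nat.choose j i : ℚ) * q ^ i * qS q s i 0) := by
      intro i _
      rw [Nat.choose_succ_succ j i]
      have hs : qS q s (i + 1) 0 = qb q s * qS q s i 0 := rfl
      push_cast
      rw [hs]
      ring
    rw [Finset.sum_congr rfl hterm, Finset.sum_add_distrib, ← Finset.mul_sum]
    have hS1 : (∑ i ∈ Finset.range (j + 1), (Nat.choose j (i + 1) : ℚ) * q ^ (i + 1) * qS q s (i + 1) 0)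
        + (Nat.choose (j + 1) 0 : ℚ) * q ^ 0 * qS q s 0 0
        = qS q (s + 1) j 0 * q ^ 0 := by
      rw [ih0]
      rw [Finset.sum_range_succ (fun i => (Nat.choose j (i + 1) : ℚ) * q ^ (i + 1) * qS q s (i + 1) 0) j]
      rw [Finset.sum_range_succ' (fun i => (Nat.choose j i : ℚ) * q ^ i * qS q s i 0) j]
      rw [Nat.choose_succ_self j]
      norm_num
    have lhs_eq : qS q (s + 1) (j + 1) 0 * q ^ 0 = qb q (s + 1) * qS q (s + 1) j 0 := by
      have : qS q (s + 1) (j + 1) 0 = qb q (s + 1) * qS q (s + 1) j 0 := rfl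
      rw [this]; ring
    rw [lhs_eq, qb_succ]
    linear_combination (-1 : ℚ) * hS1 + (q * qb q s) * ih0
  | j + 1, k + 1, s => by
    have ihk := qS_shift j k s
    have ihk1 := qS_shift j (k + 1) s
    rw [Finset.sum_range_succ' (fun i => (Nat.choose (j + 1) i : ℚ) * q ^ i * qS q s i (k + 1)) (j + 1)]
    have hterm : ∀ i ∈ Finset.range (j + 1),
        (Nat.choose (j + 1) (i + 1) : ℚ) * q ^ (i + 1) * qS q s (i + 1) (k + 1)
        = (Nat.choose j (i + 1) : ℚ) * q ^ (i + 1) * qS q s (i + 1) (k + 1)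
          + q * ((Nat.choose j i : ℚ) * q ^ i * qS q s i k)
          + q * qb q (k + 1 + s) * ((Nat.choose j i : ℚ) * q ^ i * qS q s i (k + 1)) := by
      intro i _
      rw [Nat.choose_succ_succ j i]
      have hs : qS q s (i + 1) (k + 1) = qS q s i k + qb q (k + 1 + s) * qS q s i (k + 1) := rfl
      push_cast
      rw [hs]
      ring
    rw [Finset.sum_congr rfl hterm, Finset.sum_add_distrib, Finset.sum_add_distrib,
      ← Finset.mul_sum, ← Finset.mul_sum]
    have hS1 : (∑ i ∈ Finset.range (j + 1), (Nat.choose j (i + 1) : ℚ) * q ^ (i + 1) * qS q s (i + 1) (k + 1))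
        + (Nat.choose (j + 1) 0 : ℚ) * q ^ 0 * qS q s 0 (k + 1)
        = qS q (s + 1) j (k + 1) * q ^ (k + 1) := by
      rw [ihk1]
      rw [Finset.sum_range_succ (fun i => (Nat.choose j (i + 1) : ℚ) * q ^ (i + 1) * qS q s (i + 1) (k + 1)) j]
      rw [Finset.sum_range_succ' (fun i => (Nat.choose j i : ℚ) * q ^ i * qS q s i (k + 1)) j]
      rw [Nat.choose_succ_self j]
      have h0 : qS q s 0 (k + 1) = 0 := rfl
      rw [h0]
      norm_num
    have lhs_eq : qS q (s + 1) (j + 1) (k + 1)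
        = qS q (s + 1) j k + qb q (k + 1 + (s + 1)) * qS q (s + 1) j (k + 1) := rfl
    rw [lhs_eq]
    have e1 : k + 1 + (s + 1) = (k + 1 + s) + 1 := by omega
    rw [e1, qb_succ' q (k + 1 + s)]
    have hqb : (1 : ℚ) + q * qb q (k + 1 + s) = qb q (k + 1 + s) + q ^ (k + 1 + s) :=
      (qb_succ q (k + 1 + s)).symm.trans (qb_succ' q (k + 1 + s))
    linear_combination q * ihk + (q * qb q (k + 1 + s)) * ihk1 - hS1
      - (qS q (s + 1) j (k + 1) * q ^ (k + 1)) * hqb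

lemma qPhi_shift (s j : ℕ) :
    qPhi q (s + 1) j x = ∑ i ∈ Finset.range (j + 1), (Nat.choose j i : ℚ) * q ^ i * qPhi q s i x := by
  simp only [qPhi]
  have h1 : ∀ k ∈ Finset.range (j + 1),
      qS q (s + 1) j k * q ^ Nat.choose k 2 * (q ^ (s + 1) * x) ^ k
      = ∑ i ∈ Finset.range (j + 1),
          (Nat.choose j i : ℚ) * q ^ i * (qS q s i k * q ^ Nat.choose k 2 * (q ^ s * x) ^ k) := by
    intro k _
    have e : (q ^ (s + 1) * x) ^ k = (q ^ s * x) ^ k * q ^ k := by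
      rw [pow_succ]; ring
    rw [e]
    calc qS q (s + 1) j k * q ^ Nat.choose k 2 * ((q ^ s * x) ^ k * q ^ k)
        = (qS q (s + 1) j k * q ^ k) * q ^ Nat.choose k 2 * (q ^ s * x) ^ k := by ring
      _ = (∑ i ∈ Finset.range (j + 1), (Nat.choose j i : ℚ) * q ^ i * qS q s i k)
            * q ^ Nat.choose k 2 * (q ^ s * x) ^ k := by rw [qS_shift]
      _ = _ := by
          rw [Finset.sum_mul, Finset.sum_mul]
          exact Finset.sum_congr rfl fun i _ => by ring
  rw [Finset.sum_congr rfl h1, Finset.sum_comm]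
  refine Finset.sum_congr rfl fun i hi => ?_
  rw [← Finset.mul_sum]
  congr 1
  have hij : i < j + 1 := Finset.mem_range.mp hi
  have hsub : Finset.range (i + 1) ⊆ Finset.range (j + 1) := by
    intro a ha
    rw [Finset.mem_range] at ha ⊢
    omega
  refine (Finset.sum_subset hsub fun k hk hk2 => ?_).symm
  have hik : i < k := by
    rw [Finset.mem_range] at hk
    rw [Finset.mem_range] at hk2
    omega
  rw [qS_eq_zero q i k hik]
  ring

lemma Kop_comm (a : ℚ) : ∀ (n : ℕ) (g : ℕ → ℚ) (s : ℕ),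
    Kop q n (fun t => g (t + 1) - a * g t) s = Kop q n g (s + 1) - a * Kop q n g s
  | 0, g, s => rfl
  | n + 1, g, s => by
    simp only [Kop]
    rw [Kop_comm a n g (s + 1), Kop_comm a n g s]
    ring

lemma Kop_sum {ι : Type*} (F : Finset ι) (c : ι → ℚ) (g : ι → ℕ → ℚ) :
    ∀ (n s : ℕ), Kop q n (fun t => ∑ i ∈ F, c i * g i t) s = ∑ i ∈ F, c i * Kop q n (g i) s
  | 0, s => rfl
  | n + 1, s => by
    simp only [Kop]
    rw [Kop_sum F c g n (s + 1), Kop_sum F c g n s, Finset.mul_sum, ← Finset.sum_sub_distrib]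
    exact Finset.sum_congr rfl fun i _ => by ring

lemma Kop_annih : ∀ (n j : ℕ), j < n → ∀ s : ℕ, Kop q n (fun t => qPhi q t j x) s = 0
  | 0, j, h, s => absurd h (by omega)
  | n + 1, j, h, s => by
    rcases lt_or_eq_of_le (Nat.lt_succ_iff.mp h) with h' | h'
    · simp only [Kop]
      rw [Kop_annih n j h' (s + 1), Kop_annih n j h' s]
      ring
    · have hc : Kop q (n + 1) (fun t => qPhi q t j x) s
          = Kop q n (fun t => qPhi q (t + 1) j x - q ^ n * qPhi q t j x) s := by
        rw [Kop_comm q (q ^ n) n (fun t => qPhi q t j x) s]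
        simp only [Kop]
      rw [hc]
      have hfun : (fun t => qPhi q (t + 1) j x - q ^ n * qPhi q t j x)
          = fun t => ∑ i ∈ Finset.range j, (Nat.choose j i : ℚ) * q ^ i * qPhi q t i x := by
        funext t
        rw [qPhi_shift q x t j, Finset.sum_range_succ, Nat.choose_self, h']
        push_cast
        ring
      rw [hfun, Kop_sum]
      refine Finset.sum_eq_zero fun i hi => ?_
      have hij : i < j := Finset.mem_range.mp hi
      rw [Kop_annih n i (by omega) s]
      ring

lemma kernel (n j : ℕ) (hj : j < n) (r : ℕ) :
    ∑ t ∈ Finset.range (n + 1),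
      (-1 : ℚ) ^ (n - t) * q ^ Nat.choose (n - t) 2 * qbinom q n (n - t) * qPhi q (r + t) j x
      = 0 := by
  have h := Kop_annih q x n j hj r
  rw [Kop_explicit] at h
  simpa using h


lemma pow_prod : ∀ (d jj r : ℕ),
    q ^ (r + (jj + d)) * x * q ^ Nat.choose (d + 1) 2
      * ∏ k ∈ Finset.range d, (q ^ (r + (jj + k)) * x)
    = (q ^ (jj + d + r) * x) ^ (d + 1)
  | 0, jj, r => by
    have h1 : Nat.choose 1 2 = 0 := rfl
    have e : r + (jj + 0) = jj + 0 + r := by omega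
    rw [h1, e]
    simp
  | d + 1, jj, r => by
    have ih := pow_prod d (jj + 1) r
    rw [Finset.prod_range_succ' (fun k => q ^ (r + (jj + k)) * x) d]
    have hcongr : ∀ k ∈ Finset.range d,
        q ^ (r + (jj + (k + 1))) * x = q ^ (r + (jj + 1 + k)) * x := by
      intro k _
      congr 2
      omega
    rw [Finset.prod_congr rfl hcongr]
    rw [choose_two_succ (d + 1)]
    have e1 : r + (jj + (d + 1)) = r + (jj + 1 + d) := by omega
    rw [e1]
    have e2 : jj + (d + 1) + r = jj + 1 + d + r := by omega
    rw [e2]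
    calc q ^ (r + (jj + 1 + d)) * x * q ^ (Nat.choose (d + 1) 2 + (d + 1))
          * (( ∏ k ∈ Finset.range d, q ^ (r + (jj + 1 + k)) * x) * (q ^ (r + (jj + 0)) * x))
        = (q ^ (r + (jj + 1 + d)) * x * q ^ Nat.choose (d + 1) 2
            * ∏ k ∈ Finset.range d, q ^ (r + (jj + 1 + k)) * x)
          * (q ^ (d + 1) * (q ^ (r + (jj + 0)) * x)) := by
          rw [pow_add]
          ring
      _ = (q ^ (jj + 1 + d + r) * x) ^ (d + 1) * (q ^ (d + 1) * (q ^ (r + (jj + 0)) * x)) := by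
          rw [ih]
      _ = (q ^ (jj + 1 + d + r) * x) ^ (d + 1 + 1) := by
          conv_rhs => rw [pow_succ]
          congr 1
          rw [show jj + 1 + d + r = d + 1 + (r + (jj + 0)) from by omega, pow_add]
          ring

lemma detBidiag : ∀ (m : ℕ) (a b w : ℕ → ℚ),
    Matrix.det (Matrix.of fun k j : Fin (m + 1) =>
      if (k : ℕ) = m then w (j : ℕ)
      else if (j : ℕ) = (k : ℕ) then a (k : ℕ)
      else if (j : ℕ) = (k : ℕ) + 1 then b (k : ℕ) else 0)
    = ∑ j ∈ Finset.range (m + 1),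
        w j * (-1) ^ (m + j) * (∏ k ∈ Finset.range j, a k) * (∏ k ∈ Finset.Ico j m, b k)
  | 0, a, b, w => by
    rw [Matrix.det_fin_one]
    simp
  | m + 1, a, b, w => by
    rw [Matrix.det_succ_column_zero]
    rw [← Finset.sum_subset (Finset.subset_univ {(0 : Fin (m + 2)), Fin.last (m + 1)})
      (fun i _ hi => ?_)]
    swap
    · -- vanishing terms
      simp only [Finset.mem_insert, Finset.mem_singleton, not_or] at hi
      obtain ⟨hi0, hil⟩ := hi
      have v1 : (i : ℕ) ≠ 0 := by
        intro h
        exact hi0 (Fin.ext (by simp [h]))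
      have v2 : (i : ℕ) ≠ m + 1 := by
        intro h
        exact hil (Fin.ext (by simp [h, Fin.val_last]))
      have hz : (Matrix.of fun k j : Fin (m + 2) =>
          if (k : ℕ) = m + 1 then w (j : ℕ)
          else if (j : ℕ) = (k : ℕ) then a (k : ℕ)
          else if (j : ℕ) = (k : ℕ) + 1 then b (k : ℕ) else 0) i 0 = 0 := by
        simp only [Matrix.of_apply, Fin.val_zero]
        rw [if_neg v2]
        have hn1 : ¬ (0 = (i : ℕ)) := fun h => v1 h.symm
        have hn2 : ¬ (0 = (i : ℕ) + 1) := by omega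
        simp [hn1, hn2]
      rw [hz]
      ring
    rw [Finset.sum_pair (by
      intro h
      have := congrArg Fin.val h
      simp [Fin.val_last] at this)]
    -- term i = 0
    have ht0 : (-1 : ℚ) ^ ((0 : Fin (m + 2)) : ℕ)
        * (Matrix.of fun k j : Fin (m + 2) =>
            if (k : ℕ) = m + 1 then w (j : ℕ)
            else if (j : ℕ) = (k : ℕ) then a (k : ℕ)
            else if (j : ℕ) = (k : ℕ) + 1 then b (k : ℕ) else 0) 0 0
        * Matrix.det ((Matrix.of fun k j : Fin (m + 2) =>
            if (k : ℕ) = m + 1 then w (j : ℕ)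
            else if (j : ℕ) = (k : ℕ) then a (k : ℕ)
            else if (j : ℕ) = (k : ℕ) + 1 then b (k : ℕ) else 0).submatrix
              (Fin.succAbove 0) Fin.succ)
        = a 0 * ∑ j ∈ Finset.range (m + 1),
            w (j + 1) * (-1) ^ (m + j) * (∏ k ∈ Finset.range j, a (k + 1))
              * (∏ k ∈ Finset.Ico j m, b (k + 1)) := by
      have hm : ((Matrix.of fun k j : Fin (m + 2) =>
          if (k : ℕ) = m + 1 then w (j : ℕ)
          else if (j : ℕ) = (k : ℕ) then a (k : ℕ)
          else if (j : ℕ) = (k : ℕ) + 1 then b (k : ℕ) else 0).submatrix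
            (Fin.succAbove 0) Fin.succ)
          = (Matrix.of fun k j : Fin (m + 1) =>
            if (k : ℕ) = m then w ((j : ℕ) + 1)
            else if (j : ℕ) = (k : ℕ) then a ((k : ℕ) + 1)
            else if (j : ℕ) = (k : ℕ) + 1 then b ((k : ℕ) + 1) else 0) := by
        rw [Fin.succAbove_zero]
        ext k j
        simp only [Matrix.submatrix_apply, Matrix.of_apply, Fin.val_succ]
        by_cases hk : (k : ℕ) = m
        · rw [if_pos (by omega), if_pos hk]
        · rw [if_neg (by omega), if_neg hk]
          by_cases hj : (j : ℕ) = (k : ℕ)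
          · rw [if_pos (by omega), if_pos hj]
          · rw [if_neg (by omega), if_neg hj]
            by_cases hj2 : (j : ℕ) = (k : ℕ) + 1
            · rw [if_pos (by omega), if_pos hj2]
            · rw [if_neg (by omega), if_neg hj2]
      rw [hm, detBidiag m (fun t => a (t + 1)) (fun t => b (t + 1)) (fun t => w (t + 1))]
      simp only [Matrix.of_apply, Fin.val_zero]
      rw [if_neg (show ¬((0 : ℕ) = m + 1) by omega)]
      simp
    -- term i = last
    have htl : (-1 : ℚ) ^ ((Fin.last (m + 1) : Fin (m + 2)) : ℕ)
        * (Matrix.of fun k j : Fin (m + 2) =>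
            if (k : ℕ) = m + 1 then w (j : ℕ)
            else if (j : ℕ) = (k : ℕ) then a (k : ℕ)
            else if (j : ℕ) = (k : ℕ) + 1 then b (k : ℕ) else 0) (Fin.last (m + 1)) 0
        * Matrix.det ((Matrix.of fun k j : Fin (m + 2) =>
            if (k : ℕ) = m + 1 then w (j : ℕ)
            else if (j : ℕ) = (k : ℕ) then a (k : ℕ)
            else if (j : ℕ) = (k : ℕ) + 1 then b (k : ℕ) else 0).submatrix
              (Fin.succAbove (Fin.last (m + 1))) Fin.succ)
        = (-1) ^ (m + 1) * w 0 * ∏ k ∈ Finset.range (m + 1), b k := by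
      have hm : ((Matrix.of fun k j : Fin (m + 2) =>
          if (k : ℕ) = m + 1 then w (j : ℕ)
          else if (j : ℕ) = (k : ℕ) then a (k : ℕ)
          else if (j : ℕ) = (k : ℕ) + 1 then b (k : ℕ) else 0).submatrix
            (Fin.succAbove (Fin.last (m + 1))) Fin.succ)
          = (Matrix.of fun k j : Fin (m + 1) =>
              if (j : ℕ) + 1 = (k : ℕ) then a (k : ℕ)
              else if (j : ℕ) + 1 = (k : ℕ) + 1 then b (k : ℕ) else 0) := by
        rw [Fin.succAbove_last]
        ext k j
        simp only [Matrix.submatrix_apply, Matrix.of_apply, Fin.val_succ, Fin.coe_castSucc]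
        rw [if_neg (by omega)]
      rw [hm]
      have htri : Matrix.BlockTriangular (Matrix.of fun k j : Fin (m + 1) =>
          if (j : ℕ) + 1 = (k : ℕ) then a (k : ℕ)
          else if (j : ℕ) + 1 = (k : ℕ) + 1 then b (k : ℕ) else 0) OrderDual.toDual := by
        intro i j hij
        have hji : i < j := hij
        have hval : (i : ℕ) < (j : ℕ) := hji
        simp only [Matrix.of_apply]
        rw [if_neg (by omega), if_neg (by omega)]
      rw [Matrix.det_of_lowerTriangular _ htri]
      have hdiag : ∀ i : Fin (m + 1), (Matrix.of fun k j : Fin (m + 1) =>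
          if (j : ℕ) + 1 = (k : ℕ) then a (k : ℕ)
          else if (j : ℕ) + 1 = (k : ℕ) + 1 then b (k : ℕ) else 0) i i = b (i : ℕ) := by
        intro i
        simp only [Matrix.of_apply]
        rw [if_neg (show ¬((i : ℕ) + 1 = (i : ℕ)) by omega)]
        simp
      rw [Finset.prod_congr rfl (fun i _ => hdiag i)]
      rw [Fin.prod_univ_eq_prod_range (fun t => b t) (m + 1)]
      simp [Fin.val_last]
    rw [ht0, htl]
    -- now the RHS sum
    rw [Finset.sum_range_succ' (fun j => w j * (-1 : ℚ) ^ (m + 1 + j)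
      * (∏ k ∈ Finset.range j, a k) * (∏ k ∈ Finset.Ico j (m + 1), b k)) (m + 1)]
    have hterm : ∀ j ∈ Finset.range (m + 1),
        w (j + 1) * (-1 : ℚ) ^ (m + 1 + (j + 1)) * (∏ k ∈ Finset.range (j + 1), a k)
          * (∏ k ∈ Finset.Ico (j + 1) (m + 1), b k)
        = a 0 * (w (j + 1) * (-1) ^ (m + j) * (∏ k ∈ Finset.range j, a (k + 1))
            * (∏ k ∈ Finset.Ico j m, b (k + 1))) := by
      intro j hj
      have hsign : (-1 : ℚ) ^ (m + 1 + (j + 1)) = (-1) ^ (m + j) := by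
        rw [show m + 1 + (j + 1) = (m + j) + 2 from by omega, pow_add]
        norm_num
      have hprod : (∏ k ∈ Finset.range (j + 1), a k)
          = (∏ k ∈ Finset.range j, a (k + 1)) * a 0 := Finset.prod_range_succ' a j
      have hico : (∏ k ∈ Finset.Ico (j + 1) (m + 1), b k) = ∏ k ∈ Finset.Ico j m, b (k + 1) := by
        rw [Finset.prod_Ico_eq_prod_range, Finset.prod_Ico_eq_prod_range]
        rw [Nat.succ_sub_succ]
        exact Finset.prod_congr rfl fun i _ => by rw [show j + 1 + i = j + i + 1 from by omega]
      rw [hsign, hprod, hico]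
      ring
    rw [Finset.sum_congr rfl hterm, ← Finset.mul_sum]
    have hlast : w 0 * (-1 : ℚ) ^ (m + 1 + 0) * (∏ k ∈ Finset.range 0, a k)
        * (∏ k ∈ Finset.Ico 0 (m + 1), b k)
        = (-1) ^ (m + 1) * w 0 * ∏ k ∈ Finset.range (m + 1), b k := by
      rw [← Finset.range_eq_Ico, Finset.prod_range_zero]
      ring
    rw [hlast]


def cvec (q : ℚ) (N t : ℕ) : ℚ := (-1) ^ (N - t) * q ^ Nat.choose (N - t) 2 * qbinom q N (N - t)

def matA (q x : ℚ) (r N : ℕ) : Matrix (Fin N) (Fin N) ℚ :=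
  Matrix.of fun i k => qS q r (i : ℕ) (k : ℕ) * q ^ Nat.choose (k : ℕ) 2 * (q ^ r * x) ^ (k : ℕ)

def matB (q x : ℚ) (r N : ℕ) : Matrix (Fin N) (Fin N) ℚ :=
  Matrix.of fun k j => qPhi q (r + (k : ℕ)) (j : ℕ) x

def matC (q x : ℚ) (r N : ℕ) : Matrix (Fin N) (Fin N) ℚ :=
  Matrix.of fun k j => qPhi q (r + (k : ℕ)) ((j : ℕ) + 1) x

def matG (q x : ℚ) (r m : ℕ) : Matrix (Fin (m + 1)) (Fin (m + 1)) ℚ :=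
  Matrix.of fun k j =>
    if (k : ℕ) = m then
      (if (j : ℕ) = m then qb q (r + m) else 0) - q ^ (r + m) * x * cvec q (m + 1) (j : ℕ)
    else if (j : ℕ) = (k : ℕ) then qb q (r + (k : ℕ))
    else if (j : ℕ) = (k : ℕ) + 1 then q ^ (r + (k : ℕ)) * x else 0

lemma h0fact (r N : ℕ) :
    (Matrix.of fun i j : Fin N => qPhi q r ((i : ℕ) + (j : ℕ)) x) = matA q x r N * matB q x r N := by
  ext i j
  rw [Matrix.mul_apply]
  simp only [matA, matB, Matrix.of_apply]
  have hvan : ∀ k ∈ Finset.range N, k ∉ Finset.range ((i : ℕ) + 1) →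
      qS q r (i : ℕ) k * q ^ Nat.choose k 2 * (q ^ r * x) ^ k * qPhi q (r + k) (j : ℕ) x = 0 := by
    intro k _ hk2
    rw [qS_eq_zero q (i : ℕ) k (by rw [Finset.mem_range] at hk2; omega) r]
    ring
  have hsub : Finset.range ((i : ℕ) + 1) ⊆ Finset.range N := by
    intro a ha
    rw [Finset.mem_range] at ha ⊢
    have := i.isLt
    omega
  calc qPhi q r ((i : ℕ) + (j : ℕ)) x
      = ∑ k ∈ Finset.range ((i : ℕ) + 1),
          qS q r (i : ℕ) k * q ^ Nat.choose k 2 * (q ^ r * x) ^ k * qPhi q (r + k) (j : ℕ) x :=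
        phi_add q x (i : ℕ) (j : ℕ) r
    _ = ∑ k ∈ Finset.range N,
          qS q r (i : ℕ) k * q ^ Nat.choose k 2 * (q ^ r * x) ^ k * qPhi q (r + k) (j : ℕ) x :=
        Finset.sum_subset hsub hvan
    _ = ∑ k : Fin N,
          qS q r (i : ℕ) (k : ℕ) * q ^ Nat.choose (k : ℕ) 2 * (q ^ r * x) ^ (k : ℕ)
            * qPhi q (r + (k : ℕ)) (j : ℕ) x :=
        (Fin.sum_univ_eq_sum_range (fun t =>
          qS q r (i : ℕ) t * q ^ Nat.choose t 2 * (q ^ r * x) ^ t * qPhi q (r + t) (j : ℕ) x) N).symm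

lemma h1fact (r N : ℕ) :
    (Matrix.of fun i j : Fin N => qPhi q r ((i : ℕ) + (j : ℕ) + 1) x)
      = matA q x r N * matC q x r N := by
  ext i j
  rw [Matrix.mul_apply]
  simp only [matA, matC, Matrix.of_apply]
  have e : (i : ℕ) + (j : ℕ) + 1 = (i : ℕ) + ((j : ℕ) + 1) := by omega
  rw [e]
  have hvan : ∀ k ∈ Finset.range N, k ∉ Finset.range ((i : ℕ) + 1) →
      qS q r (i : ℕ) k * q ^ Nat.choose k 2 * (q ^ r * x) ^ k
        * qPhi q (r + k) ((j : ℕ) + 1) x = 0 := by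
    intro k _ hk2
    rw [qS_eq_zero q (i : ℕ) k (by rw [Finset.mem_range] at hk2; omega) r]
    ring
  have hsub : Finset.range ((i : ℕ) + 1) ⊆ Finset.range N := by
    intro a ha
    rw [Finset.mem_range] at ha ⊢
    have := i.isLt
    omega
  calc qPhi q r ((i : ℕ) + ((j : ℕ) + 1)) x
      = ∑ k ∈ Finset.range ((i : ℕ) + 1),
          qS q r (i : ℕ) k * q ^ Nat.choose k 2 * (q ^ r * x) ^ k
            * qPhi q (r + k) ((j : ℕ) + 1) x :=
        phi_add q x (i : ℕ) ((j : ℕ) + 1) r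
    _ = ∑ k ∈ Finset.range N,
          qS q r (i : ℕ) k * q ^ Nat.choose k 2 * (q ^ r * x) ^ k
            * qPhi q (r + k) ((j : ℕ) + 1) x :=
        Finset.sum_subset hsub hvan
    _ = ∑ k : Fin N,
          qS q r (i : ℕ) (k : ℕ) * q ^ Nat.choose (k : ℕ) 2 * (q ^ r * x) ^ (k : ℕ)
            * qPhi q (r + (k : ℕ)) ((j : ℕ) + 1) x :=
        (Fin.sum_univ_eq_sum_range (fun t =>
          qS q r (i : ℕ) t * q ^ Nat.choose t 2 * (q ^ r * x) ^ t
            * qPhi q (r + t) ((j : ℕ) + 1) x) N).symm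

lemma hCfact (r m : ℕ) : matC q x r (m + 1) = matG q x r m * matB q x r (m + 1) := by
  ext k j
  rw [Matrix.mul_apply]
  simp only [matC, matG, matB, Matrix.of_apply]
  by_cases hk : (k : ℕ) = m
  · simp only [hk, eq_self_iff_true, if_true]
    have hsplit : ∀ j' : Fin (m + 1),
        ((if (j' : ℕ) = m then qb q (r + m) else 0) - q ^ (r + m) * x * cvec q (m + 1) (j' : ℕ))
          * qPhi q (r + (j' : ℕ)) (j : ℕ) x
        = (if (j' : ℕ) = m then qb q (r + m) else 0) * qPhi q (r + (j' : ℕ)) (j : ℕ) x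
          - q ^ (r + m) * x * (cvec q (m + 1) (j' : ℕ) * qPhi q (r + (j' : ℕ)) (j : ℕ) x) :=
      fun j' => by ring
    rw [Finset.sum_congr rfl (fun j' _ => hsplit j'), Finset.sum_sub_distrib, ← Finset.mul_sum]
    have h1 : ∑ j' : Fin (m + 1),
        (if (j' : ℕ) = m then qb q (r + m) else 0) * qPhi q (r + (j' : ℕ)) (j : ℕ) x
        = qb q (r + m) * qPhi q (r + m) (j : ℕ) x := by
      rw [Finset.sum_eq_single (⟨m, by omega⟩ : Fin (m + 1))]
      · simp
      · intro b _ hb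
        rw [if_neg (fun h => hb (Fin.ext h))]
        ring
      · intro h
        exact absurd (Finset.mem_univ _) h
    have h2 : ∑ j' : Fin (m + 1), cvec q (m + 1) (j' : ℕ) * qPhi q (r + (j' : ℕ)) (j : ℕ) x
        = -qPhi q (r + (m + 1)) (j : ℕ) x := by
      have hk2 := kernel q x (m + 1) (j : ℕ) j.isLt r
      have hk3 : ∑ t ∈ Finset.range (m + 2), cvec q (m + 1) t * qPhi q (r + t) (j : ℕ) x = 0 := by
        simpa only [cvec] using hk2
      rw [Finset.sum_range_succ] at hk3
      have hlast : cvec q (m + 1) (m + 1) = 1 := by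
        simp [cvec, Nat.sub_self, qbinom_zero_right]
      rw [hlast] at hk3
      rw [Fin.sum_univ_eq_sum_range (fun t => cvec q (m + 1) t * qPhi q (r + t) (j : ℕ) x) (m + 1)]
      linarith [hk3]
    rw [h1, h2]
    rw [qPhi_succ q x (r + m) (j : ℕ)]
    have e : r + m + 1 = r + (m + 1) := by omega
    rw [e]
    ring
  · simp only [if_neg hk]
    have hkm : (k : ℕ) < m := by
      have := k.isLt
      omega
    rw [Finset.sum_eq_add_of_mem (⟨(k : ℕ), by omega⟩ : Fin (m + 1))
      (⟨(k : ℕ) + 1, by omega⟩ : Fin (m + 1)) (Finset.mem_univ _) (Finset.mem_univ _)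
      (by intro h; have := congrArg Fin.val h; simp at this)
      (by
        intro c _ hc
        have v1 : ¬((c : ℕ) = (k : ℕ)) := fun h => hc.1 (Fin.ext h)
        have v2 : ¬((c : ℕ) = (k : ℕ) + 1) := fun h => hc.2 (Fin.ext h)
        rw [if_neg v1, if_neg v2]
        ring)]
    rw [if_pos (show ((⟨(k : ℕ), by omega⟩ : Fin (m + 1)) : ℕ) = (k : ℕ) from rfl)]
    rw [if_neg (show ¬((⟨(k : ℕ) + 1, by omega⟩ : Fin (m + 1)) : ℕ) = (k : ℕ) from by simp)]
    rw [if_pos (show ((⟨(k : ℕ) + 1, by omega⟩ : Fin (m + 1)) : ℕ) = (k : ℕ) + 1 from rfl)]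
    rw [qPhi_succ q x (r + (k : ℕ)) (j : ℕ)]
    have e : r + (k : ℕ) + 1 = r + ((⟨(k : ℕ) + 1, by omega⟩ : Fin (m + 1)) : ℕ) := rfl
    rw [e]

lemma hterm2gen (r m i kk : ℕ) (hik : i + kk = m + 1) (him : i ≤ m) :
    q ^ (r + m) * x * cvec q (m + 1) i * (-1) ^ (m + i)
        * (∏ k ∈ Finset.range i, qb q (r + k)) * (∏ k ∈ Finset.Ico i m, (q ^ (r + k) * x))
    = -(qbinom q (m + 1) kk * (q ^ (m + r) * x) ^ kk * ∏ j' ∈ Finset.range i, qb q (r + j')) := by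
  simp only [cvec]
  rw [show m + 1 - i = kk from by omega]
  have hQ : (∏ k ∈ Finset.Ico i m, (q ^ (r + k) * x))
      = ∏ k ∈ Finset.range (m - i), (q ^ (r + (i + k)) * x) :=
    Finset.prod_Ico_eq_prod_range _ i m
  have hpp := pow_prod q x (m - i) i r
  rw [show i + (m - i) = m from by omega] at hpp
  rw [show m - i + 1 = kk from by omega] at hpp
  have hsign : (-1 : ℚ) ^ kk * (-1 : ℚ) ^ (m + i) = -1 := by
    rw [← pow_add, show kk + (m + i) = 2 * m + 1 from by omega, pow_succ, pow_mul]
    norm_num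
  rw [hQ, ← hpp]
  linear_combination (q ^ (r + m) * x * q ^ Nat.choose kk 2
    * (∏ k ∈ Finset.range (m - i), (q ^ (r + (i + k)) * x)) * qbinom q (m + 1) kk
    * (∏ k ∈ Finset.range i, qb q (r + k))) * hsign

lemma detG_eq (r m : ℕ) : (matG q x r m).det
    = ∑ k ∈ Finset.range (m + 1 + 1),
        qbinom q (m + 1) k * (q ^ (m + r) * x) ^ k * ∏ j ∈ Finset.range (m + 1 - k), qb q (r + j) := by
  have hG : matG q x r m = Matrix.of (fun k j : Fin (m + 1) =>
      if (k : ℕ) = m then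
        (if (j : ℕ) = m then qb q (r + m) else 0) - q ^ (r + m) * x * cvec q (m + 1) (j : ℕ)
      else if (j : ℕ) = (k : ℕ) then qb q (r + (k : ℕ))
      else if (j : ℕ) = (k : ℕ) + 1 then q ^ (r + (k : ℕ)) * x else 0) := rfl
  have hdet : Matrix.det (Matrix.of (fun k j : Fin (m + 1) =>
      if (k : ℕ) = m then
        (if (j : ℕ) = m then qb q (r + m) else 0) - q ^ (r + m) * x * cvec q (m + 1) (j : ℕ)
      else if (j : ℕ) = (k : ℕ) then qb q (r + (k : ℕ))
      else if (j : ℕ) = (k : ℕ) + 1 then q ^ (r + (k : ℕ)) * x else 0))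
      = ∑ j ∈ Finset.range (m + 1),
          ((if j = m then qb q (r + m) else 0) - q ^ (r + m) * x * cvec q (m + 1) j)
            * (-1) ^ (m + j) * (∏ k ∈ Finset.range j, qb q (r + k))
            * (∏ k ∈ Finset.Ico j m, (q ^ (r + k) * x)) :=
    detBidiag m (fun t => qb q (r + t)) (fun t => q ^ (r + t) * x)
      (fun t => (if t = m then qb q (r + m) else 0) - q ^ (r + m) * x * cvec q (m + 1) t)
  rw [hG, hdet]
  have hsplit : ∀ j ∈ Finset.range (m + 1),
      ((if j = m then qb q (r + m) else 0) - q ^ (r + m) * x * cvec q (m + 1) j)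
          * (-1 : ℚ) ^ (m + j) * (∏ k ∈ Finset.range j, qb q (r + k))
          * (∏ k ∈ Finset.Ico j m, (q ^ (r + k) * x))
      = (if j = m then qb q (r + m) * (-1 : ℚ) ^ (m + j) * (∏ k ∈ Finset.range j, qb q (r + k))
            * (∏ k ∈ Finset.Ico j m, (q ^ (r + k) * x)) else 0)
        + (q ^ (r + m) * x * cvec q (m + 1) j * (-1) ^ (m + j)
            * (∏ k ∈ Finset.range j, qb q (r + k))
            * (∏ k ∈ Finset.Ico j m, (q ^ (r + k) * x))) * (-1) := by
    intro j _
    by_cases hj : j = m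
    · rw [if_pos hj, if_pos hj]
      ring
    · rw [if_neg hj, if_neg hj]
      ring
  rw [Finset.sum_congr rfl hsplit, Finset.sum_add_distrib]
  have hA : ∑ j ∈ Finset.range (m + 1),
      (if j = m then qb q (r + m) * (-1 : ℚ) ^ (m + j) * (∏ k ∈ Finset.range j, qb q (r + k))
        * (∏ k ∈ Finset.Ico j m, (q ^ (r + k) * x)) else 0)
      = ∏ k ∈ Finset.range (m + 1), qb q (r + k) := by
    rw [Finset.sum_ite_eq' (Finset.range (m + 1)) m]
    rw [if_pos (Finset.self_mem_range_succ m)]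
    rw [Finset.Ico_self, Finset.prod_empty]
    rw [show (-1 : ℚ) ^ (m + m) = 1 from by
      rw [show m + m = 2 * m from by omega, pow_mul]; norm_num]
    rw [Finset.prod_range_succ]
    ring
  have hB : ∑ j ∈ Finset.range (m + 1),
      (q ^ (r + m) * x * cvec q (m + 1) j * (-1 : ℚ) ^ (m + j)
        * (∏ k ∈ Finset.range j, qb q (r + k))
        * (∏ k ∈ Finset.Ico j m, (q ^ (r + k) * x))) * (-1)
      = ∑ j ∈ Finset.range (m + 1),
          qbinom q (m + 1) (j + 1) * (q ^ (m + r) * x) ^ (j + 1)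
            * ∏ j' ∈ Finset.range (m + 1 - (j + 1)), qb q (r + j') := by
    rw [← Finset.sum_range_reflect (fun j =>
      (q ^ (r + m) * x * cvec q (m + 1) j * (-1 : ℚ) ^ (m + j)
        * (∏ k ∈ Finset.range j, qb q (r + k))
        * (∏ k ∈ Finset.Ico j m, (q ^ (r + k) * x))) * (-1)) (m + 1)]
    refine Finset.sum_congr rfl fun j hj => ?_
    have hjm : j < m + 1 := Finset.mem_range.mp hj
    rw [show m + 1 - 1 - j = m - j from by omega]
    have := hterm2gen q x r m (m - j) (j + 1) (by omega) (by omega)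
    rw [this]
    rw [show m + 1 - (j + 1) = m - j from by omega]
    ring
  rw [hA, hB]
  rw [Finset.sum_range_succ' (fun k => qbinom q (m + 1) k * (q ^ (m + r) * x) ^ k
    * ∏ j ∈ Finset.range (m + 1 - k), qb q (r + j)) (m + 1)]
  rw [qbinom_zero_right]
  rw [show m + 1 - 0 = m + 1 from rfl]
  ring

end Hankel

/-- Shifted Hankel determinant of the Φ_n. -/
theorem hankel_qPhi_shifted (q : ℚ) (r : ℕ) (x : ℚ) (n : ℕ) :
    Matrix.det (Matrix.of fun i j : Fin n => qPhi q r ((i : ℕ) + (j : ℕ) + 1) x) =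
      Matrix.det (Matrix.of fun i j : Fin n => qPhi q r ((i : ℕ) + (j : ℕ)) x) *
        ∑ k ∈ Finset.range (n + 1),
          qbinom q n k * (q ^ (n - 1 + r) * x) ^ k *
            ∏ j ∈ Finset.range (n - k), qb q (r + j) := by
  cases n with
  | zero =>
    rw [Matrix.det_fin_zero, Matrix.det_fin_zero, Finset.sum_range_one]
    norm_num [Hankel.qbinom_zero_right]
  | succ m =>
    rw [Hankel.h1fact q x r (m + 1), Hankel.hCfact q x r m, Hankel.h0fact q x r (m + 1)]
    rw [Matrix.det_mul, Matrix.det_mul, Matrix.det_mul]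
    rw [Hankel.detG_eq q x r m]
    rw [show m + 1 - 1 + r = m + r from by omega]
    ring

end
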